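/- Suppose P : ℝ → ℝ^{n×n} satisfies the backward Lyapunov ODE on [0,T] and P(t) is symmetric positive semidefinite for every t ∈ [0,T]. If Ψ(t) ≺ 0 for all t ∈ [0,T], then Γ(t) ≺ 0 for all t ∈ [0,T]. -/

import Mathlib

open Matrix

noncomputable section

attribute [local instance] Matrix.normedAddCommGroup Matrix.normedSpace

/-- Spectral norm (ℓ²-operator norm) of a square real matrix. -/
noncomputable def sNorm {ι : Type*} [Fintype ι] [DecidableEq ι] (M : Matrix ι ι ℝ) : ℝ :=
  ‖Matrix.toEuclideanCLM (𝕜 := ℝ) M‖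

/-- `S ≺ 0`: the quadratic form of `S` is negative on every nonzero vector. -/
def NegDef {ι : Type*} [Fintype ι] (S : Matrix ι ι ℝ) : Prop :=
  ∀ x : ι → ℝ, x ≠ 0 → x ⬝ᵥ S.mulVec x < 0

/-- The 4n×4n symmetric block matrix Ψ from the paper (eq. (10)), as a function of
the tuning parameters and of the value `Pt = P(t)`. -/
noncomputable def Psi {n m : ℕ}
    (A : Matrix (Fin n) (Fin n) ℝ) (D : Matrix (Fin m) (Fin n) ℝ)
    (L : Matrix (Fin n) (Fin m) ℝ) (Q W : Matrix (Fin n) (Fin n) ℝ)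
    (ζ α h γ κ : ℝ) (Pt : Matrix (Fin n) (Fin n) ℝ) :
    Matrix (Fin 4 × Fin n) (Fin 4 × Fin n) ℝ :=
  let U := A - L * D
  let c := h ^ 2 * Real.exp (2 * α * h)
  let Ψ11 := (-(2 * (ζ - α))) • Pt + (γ * κ ^ 2) • (1 : Matrix (Fin n) (Fin n) ℝ)
  let Ψ12 := Pt * L * D + (γ * κ ^ 2) • (1 : Matrix (Fin n) (Fin n) ℝ)
  let Ψ13 := -(Pt * L * D)
  let Ψ14 : Matrix (Fin n) (Fin n) ℝ := 0
  let Ψ22 := Uᵀ * Q + Q * U + (2 * α) • Q + (γ * κ ^ 2) • (1 : Matrix (Fin n) (Fin n) ℝ)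
      + c • (Uᵀ * W * U)
  let Ψ23 := Q * L * D + c • (Uᵀ * W * L * D)
  let Ψ24 := Q + c • (Uᵀ * W)
  let Ψ33 := (-(Real.pi ^ 2 / 4)) • W + c • (Dᵀ * Lᵀ * W * L * D)
  let Ψ34 := c • (Dᵀ * Lᵀ * W)
  let Ψ44 := (-γ) • (1 : Matrix (Fin n) (Fin n) ℝ) + c • W
  fun q r =>
    (!![Ψ11, Ψ12, Ψ13, Ψ14;
        Ψ12ᵀ, Ψ22, Ψ23, Ψ24;
        Ψ13ᵀ, Ψ23ᵀ, Ψ33, Ψ34;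
        Ψ14ᵀ, Ψ24ᵀ, Ψ34ᵀ, Ψ44] q.1 r.1) q.2 r.2

/-- The 2n×2n block matrix Γ from the paper (eq. (15)). -/
noncomputable def Gam {n m : ℕ}
    (ζ : ℝ) (A : Matrix (Fin n) (Fin n) ℝ) (D : Matrix (Fin m) (Fin n) ℝ)
    (L : Matrix (Fin n) (Fin m) ℝ) (Q : Matrix (Fin n) (Fin n) ℝ)
    (Pt : Matrix (Fin n) (Fin n) ℝ) : Matrix (Fin n ⊕ Fin n) (Fin n ⊕ Fin n) ℝ :=
  Matrix.fromBlocks ((-(2 * ζ)) • Pt) (Pt * L * D) (Dᵀ * Lᵀ * Pt)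
    ((A - L * D)ᵀ * Q + Q * (A - L * D))

lemma dot_transpose_mulVec' {n m : ℕ} (M : Matrix (Fin n) (Fin m) ℝ) (x : Fin n → ℝ) (y : Fin m → ℝ) :
    y ⬝ᵥ Mᵀ.mulVec x = x ⬝ᵥ M.mulVec y := by
  rw [Matrix.mulVec_transpose, Matrix.dotProduct_mulVec, dotProduct_comm]

lemma psd_dot' {n : ℕ} {M : Matrix (Fin n) (Fin n) ℝ} (hM : M.PosSemidef) (x : Fin n → ℝ) :
    0 ≤ x ⬝ᵥ M.mulVec x := by simpa using hM.dotProduct_mulVec_nonneg x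

lemma self_dot_nonneg' {n : ℕ} (x : Fin n → ℝ) : 0 ≤ x ⬝ᵥ x :=
  Finset.sum_nonneg fun i _ => mul_self_nonneg _

lemma quad_block' {n : ℕ} (B : Fin 4 → Fin 4 → Matrix (Fin n) (Fin n) ℝ) (x y : Fin n → ℝ) :
    (fun q : Fin 4 × Fin n => ![x, y, 0, 0] q.1 q.2) ⬝ᵥ
      (Matrix.of fun q r : Fin 4 × Fin n => B q.1 r.1 q.2 r.2).mulVec
        (fun q => ![x, y, 0, 0] q.1 q.2)
    = x ⬝ᵥ (B 0 0).mulVec x + x ⬝ᵥ (B 0 1).mulVec y + y ⬝ᵥ (B 1 0).mulVec x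
      + y ⬝ᵥ (B 1 1).mulVec y := by
  simp [dotProduct, Matrix.mulVec, Fintype.sum_prod_type, Fin.sum_univ_four,
    Matrix.vecHead, Matrix.vecTail, Function.comp,
    Finset.mul_sum, Finset.sum_add_distrib, mul_add, mul_assoc]
  ring


/-- Proposition 2 of the paper: feasibility of Ψ(t) ≺ 0 on [0,T] implies Γ(t) ≺ 0 on [0,T]. -/
theorem stmt7 {n p m : ℕ} (hn : 1 ≤ n) (hp : 1 ≤ p) (hm : 1 ≤ m)
    (T ζ : ℝ) (hT : 0 < T) (hζ : 0 < ζ)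
    (A : Matrix (Fin n) (Fin n) ℝ) (C : Matrix (Fin p) (Fin n) ℝ)
    (X : Matrix (Fin n) (Fin n) ℝ) (hX : X.PosDef)
    (D : Matrix (Fin m) (Fin n) ℝ) (L : Matrix (Fin n) (Fin m) ℝ)
    (α h γ κ : ℝ) (hα0 : 0 ≤ α) (hαζ : α < ζ) (hh : 0 < h) (hγ : 0 < γ) (hκ : 0 < κ)
    (Q W : Matrix (Fin n) (Fin n) ℝ) (hQ : Q.PosDef) (hW : W.PosDef)
    (P : ℝ → Matrix (Fin n) (Fin n) ℝ)
    (hP : ∀ t ∈ Set.Icc (0:ℝ) T,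
        HasDerivAt P (-(Aᵀ * P t + P t * A + Cᵀ * C + (2 * ζ) • P t)) t)
    (hPT : P T = X)
    (hPsd : ∀ t ∈ Set.Icc (0:ℝ) T, (P t).PosSemidef)
    (hΨ : ∀ t ∈ Set.Icc (0:ℝ) T, NegDef (Psi A D L Q W ζ α h γ κ (P t))) :
    ∀ t ∈ Set.Icc (0:ℝ) T, NegDef (Gam ζ A D L Q (P t)) := by
  intro t ht v hv
  have hPsdt := hPsd t ht
  have hPts : (P t)ᵀ = P t := by
    have h1 := hPsdt.1
    rwa [Matrix.IsHermitian, Matrix.conjTranspose_eq_transpose_of_trivial] at h1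
  set x : Fin n → ℝ := fun i => v (Sum.inl i) with hxdef
  set y : Fin n → ℝ := fun i => v (Sum.inr i) with hydef
  set z : Fin 4 × Fin n → ℝ := fun q => ![x, y, 0, 0] q.1 q.2 with hzdef
  have hz : z ≠ 0 := by
    intro h0
    apply hv
    funext i
    cases i with
    | inl i => exact congrFun h0 ((0 : Fin 4), i)
    | inr i => exact congrFun h0 ((1 : Fin 4), i)
  have k0 := hΨ t ht z hz
  -- abbreviations
  set U : Matrix (Fin n) (Fin n) ℝ := A - L * D with hUdef
  set c : ℝ := h ^ 2 * Real.exp (2 * α * h) with hcdef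
  set Ψ11 : Matrix (Fin n) (Fin n) ℝ :=
    (-(2 * (ζ - α))) • P t + (γ * κ ^ 2) • (1 : Matrix (Fin n) (Fin n) ℝ) with h11
  set Ψ12 : Matrix (Fin n) (Fin n) ℝ :=
    P t * L * D + (γ * κ ^ 2) • (1 : Matrix (Fin n) (Fin n) ℝ) with h12
  set Ψ13 : Matrix (Fin n) (Fin n) ℝ := -(P t * L * D) with h13
  set Ψ22 : Matrix (Fin n) (Fin n) ℝ :=
    Uᵀ * Q + Q * U + (2 * α) • Q + (γ * κ ^ 2) • (1 : Matrix (Fin n) (Fin n) ℝ)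
      + c • (Uᵀ * W * U) with h22
  set Ψ23 : Matrix (Fin n) (Fin n) ℝ := Q * L * D + c • (Uᵀ * W * L * D) with h23
  set Ψ24 : Matrix (Fin n) (Fin n) ℝ := Q + c • (Uᵀ * W) with h24
  set Ψ33 : Matrix (Fin n) (Fin n) ℝ :=
    (-(Real.pi ^ 2 / 4)) • W + c • (Dᵀ * Lᵀ * W * L * D) with h33
  set Ψ34 : Matrix (Fin n) (Fin n) ℝ := c • (Dᵀ * Lᵀ * W) with h34
  set Ψ44 : Matrix (Fin n) (Fin n) ℝ :=
    (-γ) • (1 : Matrix (Fin n) (Fin n) ℝ) + c • W with h44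
  have k1 : x ⬝ᵥ Ψ11.mulVec x + x ⬝ᵥ Ψ12.mulVec y + y ⬝ᵥ Ψ12ᵀ.mulVec x
      + y ⬝ᵥ Ψ22.mulVec y < 0 := by
    have hrep : Psi A D L Q W ζ α h γ κ (P t) = Matrix.of
        (fun q r : Fin 4 × Fin n =>
          (fun a b => !![Ψ11, Ψ12, Ψ13, (0 : Matrix (Fin n) (Fin n) ℝ);
            Ψ12ᵀ, Ψ22, Ψ23, Ψ24;
            Ψ13ᵀ, Ψ23ᵀ, Ψ33, Ψ34;
            (0 : Matrix (Fin n) (Fin n) ℝ)ᵀ, Ψ24ᵀ, Ψ34ᵀ, Ψ44] a b) q.1 r.1 q.2 r.2) := rfl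
    have e := quad_block'
      (fun a b => !![Ψ11, Ψ12, Ψ13, (0 : Matrix (Fin n) (Fin n) ℝ);
        Ψ12ᵀ, Ψ22, Ψ23, Ψ24;
        Ψ13ᵀ, Ψ23ᵀ, Ψ33, Ψ34;
        (0 : Matrix (Fin n) (Fin n) ℝ)ᵀ, Ψ24ᵀ, Ψ34ᵀ, Ψ44] a b) x y
    rw [hzdef, hrep] at k0
    rw [e] at k0
    simp only [Matrix.cons_val', Matrix.cons_val_zero, Matrix.cons_val_one, Matrix.head_cons,
      Matrix.empty_val', Matrix.cons_val_fin_one, Matrix.head_fin_const, Matrix.of_apply] at k0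
    exact k0
  have hc0 : 0 ≤ c := by rw [hcdef]; positivity
  have hDLP : Dᵀ * Lᵀ * P t = (P t * L * D)ᵀ := by
    rw [Matrix.transpose_mul, Matrix.transpose_mul, hPts, Matrix.mul_assoc]
  have eΓ : v ⬝ᵥ (Gam ζ A D L Q (P t)).mulVec v
      = x ⬝ᵥ ((-(2 * ζ)) • P t).mulVec x + x ⬝ᵥ (P t * L * D).mulVec y
        + x ⬝ᵥ (P t * L * D).mulVec y + y ⬝ᵥ (Uᵀ * Q + Q * U).mulVec y := by
    have hv' : v = Sum.elim x y := by funext i; cases i <;> rfl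
    rw [hv', Gam, Matrix.fromBlocks_mulVec, sumElim_dotProduct_sumElim, hDLP,
      hUdef]
    simp only [Sum.elim_comp_inl, Sum.elim_comp_inr]
    rw [dotProduct_add, dotProduct_add, dot_transpose_mulVec']
    ring
  have main : v ⬝ᵥ (Gam ζ A D L Q (P t)).mulVec v
      = (x ⬝ᵥ Ψ11.mulVec x + x ⬝ᵥ Ψ12.mulVec y + y ⬝ᵥ Ψ12ᵀ.mulVec x + y ⬝ᵥ Ψ22.mulVec y)
        - (γ * κ ^ 2 * ((x + y) ⬝ᵥ (x + y)) + 2 * α * (x ⬝ᵥ (P t).mulVec x)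
          + 2 * α * (y ⬝ᵥ Q.mulVec y) + c * (y ⬝ᵥ (Uᵀ * W * U).mulVec y)) := by
    rw [eΓ, dot_transpose_mulVec', h11, h12, h22]
    simp only [Matrix.add_mulVec, Matrix.smul_mulVec, Matrix.one_mulVec,
      dotProduct_add, dotProduct_smul, smul_eq_mul, add_dotProduct,
      dotProduct_comm y x]
    ring
  have hWU : (Uᵀ * W * U).PosSemidef := by
    have h2 := hW.posSemidef.conjTranspose_mul_mul_same U
    rwa [Matrix.conjTranspose_eq_transpose_of_trivial] at h2
  have hΔ : 0 ≤ γ * κ ^ 2 * ((x + y) ⬝ᵥ (x + y)) + 2 * α * (x ⬝ᵥ (P t).mulVec x)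
      + 2 * α * (y ⬝ᵥ Q.mulVec y) + c * (y ⬝ᵥ (Uᵀ * W * U).mulVec y) := by
    have n1 := self_dot_nonneg' (x + y)
    have n2 := psd_dot' hPsdt x
    have n3 := psd_dot' hQ.posSemidef y
    have n4 := psd_dot' hWU y
    have g1 : (0:ℝ) ≤ γ * κ ^ 2 := by positivity
    nlinarith [mul_nonneg g1 n1, mul_nonneg hα0 n2, mul_nonneg hα0 n3, mul_nonneg hc0 n4]
  rw [main]
  linarith [k1, hΔ]
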